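/- Let k ≥ 2 be an integer, n := 2^k, and for j ∈ ℤ set z_j := e^{2πij/n}. Then for every integer j, the Rudin–Shapiro polynomials satisfy (4·|P_{k−2}(z_j)|² − n)·(4·|P_{k−2}(z_{j+1})|² − n) = −(|P_k(z_j)|² − n)·(|P_k(z_{j+1})|² − n). -/

import Mathlib

open Polynomial

/-- The Rudin–Shapiro polynomial pair `(P_k, Q_k)`, defined recursively by
`P_0 = Q_0 = 1`, `P_{k+1} = P_k + X^{2^k} Q_k`, `Q_{k+1} = P_k - X^{2^k} Q_k`. -/
noncomputable def RS : ℕ → Polynomial ℂ × Polynomial ℂ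
  | 0 => (1, 1)
  | k + 1 => ((RS k).1 + X ^ (2 ^ k) * (RS k).2, (RS k).1 - X ^ (2 ^ k) * (RS k).2)

lemma RS_normSq_sum (k : ℕ) (z : ℂ) (hz : Complex.normSq z = 1) :
    Complex.normSq (((RS k).1).eval z) + Complex.normSq (((RS k).2).eval z) = 2 ^ (k+1) := by
  induction k with
  | zero => norm_num [RS]
  | succ n ih =>
    have par : ∀ a b : ℂ, Complex.normSq (a+b) + Complex.normSq (a-b)
        = 2*(Complex.normSq a + Complex.normSq b) := by
      intro a b; simp [Complex.normSq_apply]; ring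
    simp only [RS, eval_add, eval_sub, eval_mul, eval_pow, eval_X]
    rw [par, map_mul, map_pow, hz]
    rw [one_pow, one_mul, ih]
    ring

lemma RS_node (m : ℕ) (z : ℂ) (hz : Complex.normSq z = 1)
    (him : (z ^ 2 ^ (m+1)).im = 0) :
    Complex.normSq (((RS (m+2)).1).eval z) - 2 ^ (m+2)
      = (z ^ 2 ^ (m+1)).re * (4 * Complex.normSq (((RS m).1).eval z) - 2 ^ (m+2)) := by
  set P := ((RS m).1).eval z with hP
  set Q := ((RS m).2).eval z with hQ
  set w := z ^ 2 ^ m with hw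
  have hws : z ^ 2 ^ (m+1) = w ^ 2 := by
    rw [hw, ← pow_mul]; ring_nf
  set u := (starRingEnd ℂ) w with hu
  have h1 : w * u = 1 := by
    rw [hu, Complex.mul_conj, hw, map_pow, hz, one_pow, Complex.ofReal_one]
  have h2 : u ^ 2 = w ^ 2 := by
    rw [hu, ← map_pow, Complex.conj_eq_iff_im]
    rw [hws] at him; exact him
  have hev : ((RS (m+2)).1).eval z = (P + w*Q) + w^2*(P - w*Q) := by
    simp only [RS, eval_add, eval_sub, eval_mul, eval_pow, eval_X, ← hP, ← hQ, ← hw, ← hws]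
  have hcev : (starRingEnd ℂ) (((RS (m+2)).1).eval z)
      = ((starRingEnd ℂ) P + u*(starRingEnd ℂ) Q)
        + u^2*((starRingEnd ℂ) P - u*(starRingEnd ℂ) Q) := by
    rw [hev]; push_cast [map_add, map_mul, map_sub, map_pow]; rfl
  have key : ((P + w*Q) + w^2*(P - w*Q)) * (((starRingEnd ℂ) P + u*(starRingEnd ℂ) Q)
        + u^2*((starRingEnd ℂ) P - u*(starRingEnd ℂ) Q))
      = 2*(P*(starRingEnd ℂ) P + Q*(starRingEnd ℂ) Q)
        + 2*w^2*(P*(starRingEnd ℂ) P - Q*(starRingEnd ℂ) Q) := by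
    linear_combination ((P - w*Q)*((starRingEnd ℂ) P - u*(starRingEnd ℂ) Q)*(w*u+1)
      + 2*Q*(starRingEnd ℂ) Q*(1-w^2)) * h1
      + ((P + w*Q)*((starRingEnd ℂ) P - u*(starRingEnd ℂ) Q)) * h2
  have hc : (Complex.normSq (((RS (m+2)).1).eval z) : ℂ)
      = 2*((Complex.normSq P : ℂ) + (Complex.normSq Q : ℂ))
        + 2*w^2*((Complex.normSq P : ℂ) - (Complex.normSq Q : ℂ)) := by
    rw [← Complex.mul_conj, hcev, hev, key, Complex.mul_conj, Complex.mul_conj]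
  have him2 : (w^2).im = 0 := by rw [← hws]; exact him
  have hre := congrArg Complex.re hc
  simp only [Complex.add_re, Complex.mul_re, Complex.sub_re, Complex.ofReal_re,
    Complex.ofReal_im, Complex.add_im, Complex.sub_im, Complex.mul_im, him2,
    Complex.re_ofNat, Complex.im_ofNat] at hre
  have hsum : Complex.normSq P + Complex.normSq Q = 2 ^ (m+1) :=
    RS_normSq_sum m z hz
  rw [hws]
  linear_combination hre + (2 - 2*(w^2).re) * hsum

theorem rudin_shapiro_consecutive_nodes_product (k : ℕ) (hk : 2 ≤ k) (j : ℤ)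
    (z : ℤ → ℂ) (hz : ∀ l : ℤ, z l = Complex.exp (Complex.I * (2 * Real.pi * l / (2 : ℝ) ^ k))) :
    (4 * (‖((RS (k - 2)).1).eval (z j)‖)^2 - (2 : ℝ)^k)
        * (4 * (‖((RS (k - 2)).1).eval (z (j + 1))‖)^2 - (2 : ℝ)^k)
      = -(((‖((RS k).1).eval (z j)‖)^2 - (2 : ℝ)^k)
        * ((‖((RS k).1).eval (z (j + 1))‖)^2 - (2 : ℝ)^k)) := by
  obtain ⟨m, rfl⟩ : ∃ m, k = m + 2 := ⟨k - 2, by omega⟩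
  have hnode : ∀ l : ℤ, Complex.normSq (((RS (m+2)).1).eval (z l)) - 2 ^ (m+2)
      = (-1:ℝ)^l * (4 * Complex.normSq (((RS m).1).eval (z l)) - 2 ^ (m+2)) := by
    intro l
    have hzl : z l = Complex.exp (((2*Real.pi*l/2^(m+2) : ℝ) : ℂ) * Complex.I) := by
      rw [hz]; congr 1; push_cast; ring
    have hnormSq : Complex.normSq (z l) = 1 := by
      rw [hzl, Complex.normSq_eq_norm_sq, Complex.norm_exp_ofReal_mul_I, one_pow]
    have hpow : (z l) ^ 2 ^ (m+1) = (-1:ℂ)^l := by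
      rw [hzl, ← Complex.exp_nat_mul]
      have h2 : ((2:ℂ))^(m+2) ≠ 0 := pow_ne_zero _ two_ne_zero
      have harg : ((2^(m+1) : ℕ) : ℂ) * (((2*Real.pi*l/2^(m+2) : ℝ) : ℂ) * Complex.I)
          = (l : ℂ) * (Real.pi * Complex.I) := by
        push_cast
        field_simp
        ring
      rw [harg, Complex.exp_int_mul, Complex.exp_pi_mul_I]
    have hcast : ((-1:ℂ))^l = (((-1:ℝ)^l : ℝ) : ℂ) := by
      rw [Complex.ofReal_zpow]; norm_num
    have him0 : ((z l) ^ 2 ^ (m+1)).im = 0 := by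
      rw [hpow, hcast, Complex.ofReal_im]
    have hre0 : ((z l) ^ 2 ^ (m+1)).re = (-1:ℝ)^l := by
      rw [hpow, hcast, Complex.ofReal_re]
    have h := RS_node m (z l) hnormSq him0
    rw [hre0] at h
    exact h
  simp only [Nat.add_sub_cancel, Complex.sq_norm]
  have hj := hnode j
  have hj1 := hnode (j+1)
  have hs : ((-1:ℝ))^(j+1) = -(-1:ℝ)^j := by
    rw [zpow_add₀ (by norm_num : (-1:ℝ) ≠ 0), zpow_one]; ring
  have hsq : ((-1:ℝ))^j * ((-1:ℝ))^j = 1 := by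
    rw [← zpow_add₀ (by norm_num : (-1:ℝ) ≠ 0)]; exact Even.neg_one_zpow ⟨j, rfl⟩
  rw [hs] at hj1
  linear_combination (Complex.normSq (((RS (m+2)).1).eval (z (j+1))) - 2^(m+2)) * hj
    + ((-1:ℝ)^j * (4 * Complex.normSq (((RS m).1).eval (z j)) - 2^(m+2))) * hj1
    - (4 * Complex.normSq (((RS m).1).eval (z j)) - 2^(m+2))
      * (4 * Complex.normSq (((RS m).1).eval (z (j+1))) - 2^(m+2)) * hsq
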